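/- Let 𝔤 be a finite-dimensional Lie algebra over a field K whose Killing form κ is nondegenerate, and let Z ∈ 𝔤 with Z ≠ 0. Then for Y ∈ 𝔤 the following are equivalent: (i) κ(⁅X, Y⁆, Z) = 0 for every X ∈ 𝔤 with κ(X, Z) = 0; (ii) there exists λ ∈ K with ⁅Y, Z⁆ = λ • Z. In other words, the radical of the pairing (X, Y) ↦ κ(⁅X, Y⁆, Z) restricted to Z^⊥ is exactly 𝔷_{[Z]}. -/

import Mathlib

/-- Let `𝔤` be a finite-dimensional Lie algebra over a field `K` whose Killing form `κ` is
nondegenerate, and let `Z ∈ 𝔤` with `Z ≠ 0`. Then for `Y ∈ 𝔤` the following are equivalent: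
(i) `κ(⁅X, Y⁆, Z) = 0` for every `X ∈ 𝔤` with `κ(X, Z) = 0`;
(ii) there exists `λ ∈ K` with `⁅Y, Z⁆ = l • Z`. -/
theorem pairing_radical_eq_projective_centralizer
    {K : Type*} [Field K] {L : Type*} [LieRing L] [LieAlgebra K L]
    [FiniteDimensional K L] (hnd : (killingForm K L).Nondegenerate)
    (Z : L) (hZ : Z ≠ 0) (Y : L) :
    (∀ X : L, killingForm K L X Z = 0 → killingForm K L ⁅X, Y⁆ Z = 0) ↔
      ∃ l : K, ⁅Y, Z⁆ = l • Z := by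
  have hinv : ∀ X : L, killingForm K L ⁅X, Y⁆ Z = killingForm K L X ⁅Y, Z⁆ := fun X =>
    LieModule.traceForm_apply_lie_apply K L L X Y Z
  constructor
  · intro h
    -- functional ψ := κ(·, Z), φ := κ(·, ⁅Y,Z⁆); ker ψ ≤ ker φ
    set ψ : L →ₗ[K] K := (killingForm K L).flip Z with hψ
    set φ : L →ₗ[K] K := (killingForm K L).flip ⁅Y, Z⁆ with hφ
    have hker : ⨅ _ : Unit, LinearMap.ker ψ ≤ LinearMap.ker φ := by
      rw [iInf_const]
      intro X hX
      rw [LinearMap.mem_ker] at hX ⊢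
      have hX' : killingForm K L X Z = 0 := hX
      show killingForm K L X ⁅Y, Z⁆ = 0
      rw [← hinv]
      exact h X hX'
    have := mem_span_of_iInf_ker_le_ker (𝕜 := K) hker
    have hrange : Set.range (fun _ : Unit => ψ) = {ψ} := by
      simp [Set.range_const]
    rw [hrange, Submodule.mem_span_singleton] at this
    obtain ⟨c, hc⟩ := this
    refine ⟨c, ?_⟩
    have : ∀ X : L, killingForm K L X (⁅Y, Z⁆ - c • Z) = 0 := by
      intro X
      have := LinearMap.congr_fun hc X
      have this' : c * killingForm K L X Z = killingForm K L X ⁅Y, Z⁆ := this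
      simp only [map_sub, map_smul, smul_eq_mul]
      linear_combination -this'
    have h0 : ⁅Y, Z⁆ - c • Z = 0 := by
      apply hnd.1
      intro X
      rw [LieModule.traceForm_comm]
      exact this X
    exact sub_eq_zero.mp h0
  · intro ⟨l, hl⟩ X hX
    rw [hinv, hl]
    simp [hX]
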